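/- Let B be a C*-algebra and X a Hilbert C*-module over B. Suppose (X_k)_{k∈ℤ} is a family of closed submodules of X such that ⟪x, y⟫ = 0 whenever x ∈ X_k, y ∈ X_l with k ≠ l, and the algebraic span of ⋃_k X_k is dense in X. Suppose each X_k admits a finite frame (ξ^{(k)}_j)_{j=1}^{m_k} of elements of X_k, i.e. ∑_{j=1}^{m_k} ξ^{(k)}_j·⟪ξ^{(k)}_j, x⟫ = x for all x ∈ X_k. Define T_N(x) := ∑_{|k| ≤ N} ∑_{j=1}^{m_k} ξ^{(k)}_j·⟪ξ^{(k)}_j, x⟫ for x ∈ X. Then ‖T_N(x)‖ ≤ ‖x‖ for all N and all x ∈ X, and T_N(x) → x as N → ∞ for every x ∈ X; in other words, the concatenation of the frames of the X_k, ordered in blocks of increasing |k|, is a (countable) frame for X. -/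

import Mathlib

open Filter Topology
open scoped RightActions

/-- The December 2024 Mathlib `CStarModule` class (right `Aᵐᵒᵖ`-action, `⟪x, y <• a⟫ = ⟪x, y⟫ * a`),
restated verbatim because Mathlib's `CStarModule` now uses a left action `[SMul A E]`. -/
class OldCStarModule (A E : Type*) [NonUnitalSemiring A] [StarRing A]
    [Module ℂ A] [AddCommGroup E] [Module ℂ E] [PartialOrder A] [SMul Aᵐᵒᵖ E] [Norm A] [Norm E]
    extends Inner A E where
  inner_add_right {x} {y} {z} : inner x (y + z) = inner x y + inner x z
  inner_self_nonneg {x} : 0 ≤ inner x x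
  inner_self {x} : inner x x = 0 ↔ x = 0
  inner_op_smul_right {a : A} {x y : E} : inner x (y <• a) = inner x y * a
  inner_smul_right_complex {z : ℂ} {x} {y} : inner x (z • y) = z • inner x y
  star_inner x y : star (inner x y) = inner y x
  norm_eq_sqrt_norm_inner_self x : ‖x‖ = √‖inner x x‖

attribute [simp] OldCStarModule.inner_add_right OldCStarModule.star_inner
  OldCStarModule.inner_op_smul_right OldCStarModule.inner_smul_right_complex

namespace OldCStarModule

section general

variable {A E : Type*} [NonUnitalCStarAlgebra A] [PartialOrder A] [NormedAddCommGroup E]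
  [Module ℂ E] [SMul Aᵐᵒᵖ E] [OldCStarModule A E]

lemma inner_add_left' {x y z : E} : inner A (x + y) z = inner A x z + inner A y z := by
  rw [← star_star (r := inner A (x + y) z)]
  simp only [inner_add_right, star_add, star_inner]

lemma inner_op_smul_left {a : A} {x y : E} : inner A (x <• a) y = star a * inner A x y := by
  rw [← star_inner]; simp

lemma inner_smul_left_complex {z : ℂ} {x y : E} : inner A (z • x) y = star z • inner A x y := by
  rw [← star_inner]
  simp

lemma inner_smul_left_real {z : ℝ} {x y : E} : inner A (z • x) y = z • inner A x y := by
  have h₁ : z • x = (z : ℂ) • x := by simp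
  rw [h₁, ← star_inner, inner_smul_right_complex]
  simp

lemma inner_smul_right_real {z : ℝ} {x y : E} : inner A x (z • y) = z • inner A x y := by
  have h₁ : z • y = (z : ℂ) • y := by simp
  rw [h₁, ← star_inner, inner_smul_left_complex]
  simp

def innerₛₗ : E →ₗ⋆[ℂ] E →ₗ[ℂ] A where
  toFun x := { toFun := fun y => inner A x y
               map_add' := fun z y => by simp
               map_smul' := fun z y => by simp }
  map_add' z y := by ext; simp [inner_add_left']
  map_smul' z y := by ext; simp [inner_smul_left_complex]

lemma innerₛₗ_apply {x y : E} : innerₛₗ x y = inner A x y := rfl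

@[simp] lemma inner_zero_right {x : E} : inner A x 0 = 0 := by simp [← innerₛₗ_apply]
@[simp] lemma inner_zero_left {x : E} : inner A 0 x = 0 := by simp [← innerₛₗ_apply]
lemma inner_sub_right {x y z : E} : inner A x (y - z) = inner A x y - inner A x z := by
  simp [← innerₛₗ_apply]
lemma inner_sub_left {x y z : E} : inner A (x - y) z = inner A x z - inner A y z := by
  simp [← innerₛₗ_apply]

lemma inner_sum_right {ι : Type*} {s : Finset ι} {x : E} {y : ι → E} :
    inner A x (∑ i ∈ s, y i) = ∑ i ∈ s, inner A x (y i) :=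
  map_sum (innerₛₗ x) ..

lemma inner_sum_left {ι : Type*} {s : Finset ι} {x : ι → E} {y : E} :
    inner A (∑ i ∈ s, x i) y = ∑ i ∈ s, inner A (x i) y :=
  map_sum (innerₛₗ.flip y) ..

lemma norm_sq_eq {x : E} : ‖x‖ ^ 2 = ‖inner A x x‖ := by
  simp [norm_eq_sqrt_norm_inner_self (A := A)]

variable [StarOrderedRing A]

lemma inner_mul_inner_swap_le {x y : E} :
    inner A y x * inner A x y ≤ ‖x‖ ^ 2 • inner A y y := by
  rcases eq_or_ne x 0 with h | h
  · simp [h]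
  · have hpos : 0 < ‖x‖ := by
      rw [norm_eq_sqrt_norm_inner_self (A := A), Real.sqrt_pos, norm_pos_iff]
      intro H
      rw [inner_self] at H
      exact h H
    have h₁ : ∀ (a : A),
        (0 : A) ≤ ‖x‖ ^ 2 • (star a * a) - ‖x‖ ^ 2 • (star a * inner A x y)
                  - ‖x‖ ^ 2 • (inner A y x * a) + ‖x‖ ^ 2 • (‖x‖ ^ 2 • inner A y y) := fun a => by
      calc (0 : A) ≤ inner A (x <• a - ‖x‖ ^ 2 • y) (x <• a - ‖x‖ ^ 2 • y) := by
                      exact inner_self_nonneg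
            _ = star a * inner A x x * a - ‖x‖ ^ 2 • (star a * inner A x y)
                  - ‖x‖ ^ 2 • (inner A y x * a) + ‖x‖ ^ 2 • (‖x‖ ^ 2 • inner A y y) := by
                      simp only [inner_sub_right, inner_op_smul_right, inner_sub_left,
                        inner_op_smul_left, inner_smul_left_real, mul_sub, sub_mul, mul_smul_comm,
                        smul_mul_assoc, inner_smul_right_real, smul_sub, mul_assoc]
                      abel
            _ ≤ ‖x‖ ^ 2 • (star a * a) - ‖x‖ ^ 2 • (star a * inner A x y)
                  - ‖x‖ ^ 2 • (inner A y x * a) + ‖x‖ ^ 2 • (‖x‖ ^ 2 • inner A y y) := by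
                      gcongr
                      calc _ ≤ ‖inner A x x‖ • (star a * a) :=
                          CStarAlgebra.star_left_conjugate_le_norm_smul (star_inner x x)
                        _ = (√‖inner A x x‖) ^ 2 • (star a * a) := by
                          rw [Real.sq_sqrt]
                          positivity
                        _ = ‖x‖ ^ 2 • (star a * a) := by rw [← norm_eq_sqrt_norm_inner_self]
    specialize h₁ (inner A x y)
    simp only [star_inner, sub_self, zero_sub, le_neg_add_iff_add_le, add_zero] at h₁
    rwa [smul_le_smul_iff_of_pos_left (pow_pos hpos _)] at h₁

variable (E) in
lemma norm_inner_le {x y : E} : ‖inner A x y‖ ≤ ‖x‖ * ‖y‖ := by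
  have := calc ‖inner A x y‖ ^ 2 = ‖inner A y x * inner A x y‖ := by
                rw [← star_inner x, CStarRing.norm_star_mul_self, pow_two]
    _ ≤ ‖‖x‖ ^ 2 • inner A y y‖ := by
                refine CStarAlgebra.norm_le_norm_of_nonneg_of_le ?_ inner_mul_inner_swap_le
                rw [← star_inner x]
                exact star_mul_self_nonneg (inner A x y)
    _ = ‖x‖ ^ 2 * ‖inner A y y‖ := by simp [norm_smul]
    _ = ‖x‖ ^ 2 * ‖y‖ ^ 2 := by
                simp only [norm_eq_sqrt_norm_inner_self (A := A), norm_nonneg, Real.sq_sqrt]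
    _ = (‖x‖ * ‖y‖) ^ 2 := by simp only [mul_pow]
  refine (pow_le_pow_iff_left₀ (norm_nonneg (inner A x y)) ?_ two_ne_zero).mp this
  exact mul_nonneg (norm_nonneg _) (norm_nonneg _)

end general

end OldCStarModule

/-- Let `X` be a Hilbert C⋆-module over a C⋆-algebra `B` and
`(X_k)_{k ∈ ℤ}` a family of mutually orthogonal closed submodules whose algebraic span
is dense in `X`.  If each `X_k` has a finite frame `(ξ^{(k)}_j)_j` of elements of `X_k`,
then the operators `T_N x = ∑_{|k| ≤ N} ∑_j ξ^{(k)}_j·⟪ξ^{(k)}_j, x⟫` satisfy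
`‖T_N x‖ ≤ ‖x‖` and `T_N x → x` for every `x ∈ X`; i.e. the concatenation of the frames,
in blocks of increasing `|k|`, is a countable frame for `X`. -/
theorem frame_of_orthogonal_decomposition
    {B X : Type*} [CStarAlgebra B] [PartialOrder B] [StarOrderedRing B]
    [NormedAddCommGroup X] [Module ℂ X] [Module Bᵐᵒᵖ X] [OldCStarModule B X] [CompleteSpace X]
    (Xk : ℤ → Submodule ℂ X)
    (hclosed : ∀ k, IsClosed (Xk k : Set X))
    (hsubmod : ∀ (k : ℤ) (b : B), ∀ x ∈ Xk k, x <• b ∈ Xk k)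
    (horth : ∀ k l : ℤ, k ≠ l → ∀ x ∈ Xk k, ∀ y ∈ Xk l, (inner B x y : B) = 0)
    (hdense : Dense ((Submodule.span ℂ (⋃ k : ℤ, (Xk k : Set X)) : Submodule ℂ X) : Set X))
    (m : ℤ → ℕ) (ξ : (k : ℤ) → Fin (m k) → X)
    (hmem : ∀ k j, ξ k j ∈ Xk k)
    (hframe : ∀ k : ℤ, ∀ x ∈ Xk k, ∑ j, ξ k j <• (inner B (ξ k j) x : B) = x) :
    (∀ (N : ℕ) (x : X),
      ‖∑ k ∈ Finset.Icc (-(N : ℤ)) (N : ℤ), ∑ j, ξ k j <• (inner B (ξ k j) x : B)‖ ≤ ‖x‖) ∧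
    (∀ x : X,
      Tendsto (fun N : ℕ =>
          ∑ k ∈ Finset.Icc (-(N : ℤ)) (N : ℤ), ∑ j, ξ k j <• (inner B (ξ k j) x : B))
        atTop (𝓝 x)) := by
  classical
  -- the block projections
  set P : ℤ → X → X := fun k x => ∑ j, ξ k j <• (inner B (ξ k j) x : B) with hP
  -- basic properties of P
  have hP_mem : ∀ k x, P k x ∈ Xk k := fun k x =>
    Submodule.sum_mem _ fun j _ => hsubmod k _ _ (hmem k j)
  have hP_zero_of_orth : ∀ k l, k ≠ l → ∀ y ∈ Xk l, P k y = 0 := by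
    intro k l hkl y hy
    simp only [hP]
    refine Finset.sum_eq_zero fun j _ => ?_
    rw [horth k l hkl _ (hmem k j) y hy]
    simp
  have hP_fix : ∀ k, ∀ y ∈ Xk k, P k y = y := fun k y hy => hframe k y hy
  have hP_adj : ∀ k (x y : X), (inner B (P k x) y : B) = inner B x (P k y) := by
    intro k x y
    simp only [hP, OldCStarModule.inner_sum_left, OldCStarModule.inner_sum_right,
      OldCStarModule.inner_op_smul_left, OldCStarModule.inner_op_smul_right,
      OldCStarModule.star_inner]
  have hP_add : ∀ k (x y : X), P k (x + y) = P k x + P k y := by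
    intro k x y
    simp only [hP, OldCStarModule.inner_add_right, MulOpposite.op_add, add_smul,
      Finset.sum_add_distrib]
  have hP_sub : ∀ k (x y : X), P k (x - y) = P k x - P k y := by
    intro k x y
    simp only [hP, OldCStarModule.inner_sub_right, MulOpposite.op_sub, sub_smul,
      Finset.sum_sub_distrib]
  have hP_zero : ∀ k, P k 0 = 0 := by
    intro k
    simp [hP]
  -- the key inner product identity
  have key : ∀ (N : ℕ) (x : X),
      (inner B (∑ k ∈ Finset.Icc (-(N : ℤ)) (N : ℤ), P k x)
        (∑ k ∈ Finset.Icc (-(N : ℤ)) (N : ℤ), P k x) : B)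
      = inner B x (∑ k ∈ Finset.Icc (-(N : ℤ)) (N : ℤ), P k x) := by
    intro N x
    rw [OldCStarModule.inner_sum_left, OldCStarModule.inner_sum_right]
    refine Finset.sum_congr rfl fun k hk => ?_
    rw [OldCStarModule.inner_sum_right]
    rw [Finset.sum_eq_single_of_mem k hk (fun l hl hlk => by
      exact horth k l (fun h => hlk h.symm) _ (hP_mem k x) _ (hP_mem l x))]
    rw [hP_adj, hP_fix k _ (hP_mem k x)]
  -- the norm bound
  have hbound : ∀ (N : ℕ) (x : X),
      ‖∑ k ∈ Finset.Icc (-(N : ℤ)) (N : ℤ), P k x‖ ≤ ‖x‖ := by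
    intro N x
    set T := ∑ k ∈ Finset.Icc (-(N : ℤ)) (N : ℤ), P k x with hT
    rcases eq_or_ne T 0 with h | h
    · simp [h]
    · have h1 : ‖T‖ ^ 2 = ‖(inner B T T : B)‖ := OldCStarModule.norm_sq_eq
      have h2 : ‖(inner B x T : B)‖ ≤ ‖x‖ * ‖T‖ := OldCStarModule.norm_inner_le X
      have h3 : ‖T‖ * ‖T‖ ≤ ‖x‖ * ‖T‖ := by
        calc ‖T‖ * ‖T‖ = ‖T‖ ^ 2 := (sq ‖T‖).symm
        _ = ‖(inner B T T : B)‖ := h1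
        _ = ‖(inner B x T : B)‖ := by rw [key N x]
        _ ≤ ‖x‖ * ‖T‖ := h2
      exact le_of_mul_le_mul_right h3 (norm_pos_iff.mpr h)
  refine ⟨hbound, ?_⟩
  -- eventual equality on the dense span
  have hspan : ∀ y ∈ Submodule.span ℂ (⋃ k : ℤ, (Xk k : Set X)),
      ∃ N₀ : ℕ, ∀ N ≥ N₀, ∑ k ∈ Finset.Icc (-(N : ℤ)) (N : ℤ), P k y = y := by
    intro y hy
    rw [Submodule.span_iUnion] at hy
    simp only [Submodule.span_eq] at hy
    induction hy using Submodule.iSup_induction' with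
    | mem k y hyk =>
      refine ⟨k.natAbs, fun N hN => ?_⟩
      have hkmem : k ∈ Finset.Icc (-(N : ℤ)) (N : ℤ) := by
        simp only [Finset.mem_Icc]
        omega
      rw [Finset.sum_eq_single_of_mem k hkmem (fun l hl hlk =>
        hP_zero_of_orth l k (fun h => hlk h) y hyk)]
      exact hP_fix k y hyk
    | zero =>
      exact ⟨0, fun N _ => Finset.sum_eq_zero fun k _ => hP_zero k⟩
    | add y z _ _ hy hz =>
      obtain ⟨N₁, h₁⟩ := hy
      obtain ⟨N₂, h₂⟩ := hz
      refine ⟨max N₁ N₂, fun N hN => ?_⟩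
      have : ∑ k ∈ Finset.Icc (-(N : ℤ)) (N : ℤ), P k (y + z)
          = (∑ k ∈ Finset.Icc (-(N : ℤ)) (N : ℤ), P k y)
            + ∑ k ∈ Finset.Icc (-(N : ℤ)) (N : ℤ), P k z := by
        rw [← Finset.sum_add_distrib]
        exact Finset.sum_congr rfl fun k _ => hP_add k y z
      rw [this, h₁ N (le_trans (le_max_left _ _) hN), h₂ N (le_trans (le_max_right _ _) hN)]
  -- conclude by an ε/3 argument
  intro x
  rw [Metric.tendsto_atTop]
  intro ε hε
  obtain ⟨y, hy_ball, hy_span⟩ := Metric.dense_iff.mp hdense x (ε / 3) (by linarith)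
  obtain ⟨N₀, hN₀⟩ := hspan y hy_span
  refine ⟨N₀, fun N hN => ?_⟩
  have hTsub : ∑ k ∈ Finset.Icc (-(N : ℤ)) (N : ℤ), P k x
      - ∑ k ∈ Finset.Icc (-(N : ℤ)) (N : ℤ), P k y
      = ∑ k ∈ Finset.Icc (-(N : ℤ)) (N : ℤ), P k (x - y) := by
    rw [← Finset.sum_sub_distrib]
    exact Finset.sum_congr rfl fun k _ => (hP_sub k x y).symm
  have hxy : ‖x - y‖ < ε / 3 := by
    rw [← dist_eq_norm, dist_comm]
    exact Metric.mem_ball.mp hy_ball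
  calc dist (∑ k ∈ Finset.Icc (-(N : ℤ)) (N : ℤ), P k x) x
      = ‖∑ k ∈ Finset.Icc (-(N : ℤ)) (N : ℤ), P k x - x‖ := dist_eq_norm _ _
    _ = ‖(∑ k ∈ Finset.Icc (-(N : ℤ)) (N : ℤ), P k x
          - ∑ k ∈ Finset.Icc (-(N : ℤ)) (N : ℤ), P k y) + (y - x)‖ := by
        rw [hN₀ N hN]; congr 1; abel
    _ ≤ ‖∑ k ∈ Finset.Icc (-(N : ℤ)) (N : ℤ), P k x
          - ∑ k ∈ Finset.Icc (-(N : ℤ)) (N : ℤ), P k y‖ + ‖y - x‖ := norm_add_le _ _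
    _ = ‖∑ k ∈ Finset.Icc (-(N : ℤ)) (N : ℤ), P k (x - y)‖ + ‖y - x‖ := by rw [hTsub]
    _ ≤ ‖x - y‖ + ‖y - x‖ := by
        have := hbound N (x - y)
        linarith
    _ = ‖x - y‖ + ‖x - y‖ := by rw [norm_sub_rev y x]
    _ < ε := by linarith
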